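/- Under Assumption (a), the function Ξ_μ : ℝ^{Z_m} → ℝ is continuously differentiable, and for every p ∈ ℝ^{Z_m} and every z ∈ Z_m its partial derivative is ∂Ξ_μ/∂p_z (p) = μ(A_z(p)). -/

import Mathlib

open MeasureTheory Metric Set Finset

set_option linter.unusedSectionVars false
set_option maxHeartbeats 1000000

section aux
variable {X : Type*} [TopologicalSpace X] [MeasurableSpace X] [BorelSpace X]
variable {ι : Type*} [Fintype ι] [Nonempty ι] [DecidableEq ι]
variable (c1 : X → ι → ℝ)

noncomputable def xiF (p : ι → ℝ) (x : X) : ℝ := ⨅ z, c1 x z + p z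

lemma xiF_eq_inf' (p : ι → ℝ) (x : X) :
    xiF c1 p x = Finset.univ.inf' Finset.univ_nonempty (fun z => c1 x z + p z) :=
  (Finset.inf'_univ_eq_ciInf _).symm

lemma xiF_le (p : ι → ℝ) (x : X) (z : ι) : xiF c1 p x ≤ c1 x z + p z := by
  rw [xiF_eq_inf']
  exact Finset.inf'_le _ (Finset.mem_univ z)

lemma exists_min (p : ι → ℝ) (x : X) :
    ∃ z0, xiF c1 p x = c1 x z0 + p z0 := by
  rw [xiF_eq_inf']
  obtain ⟨z0, _, h⟩ := Finset.exists_mem_eq_inf' (Finset.univ_nonempty)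
    (fun z => c1 x z + p z)
  exact ⟨z0, h⟩

lemma xiF_cont (hc1 : ∀ z, Continuous fun x => c1 x z) (p : ι → ℝ) :
    Continuous fun x => xiF c1 p x := by
  simp only [xiF_eq_inf']
  exact Continuous.finset_inf'_apply Finset.univ_nonempty
    (fun z _ => (hc1 z).add continuous_const)

lemma xiF_lip (x : X) : LipschitzWith 1 (fun p => xiF c1 p x) := by
  apply LipschitzWith.of_dist_le_mul
  intro p q
  rw [NNReal.coe_one, one_mul, Real.dist_eq, abs_sub_le_iff]
  constructor
  · obtain ⟨z0, hz0⟩ := exists_min c1 q x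
    calc xiF c1 p x - xiF c1 q x ≤ (c1 x z0 + p z0) - (c1 x z0 + q z0) := by
          rw [hz0]; exact sub_le_sub_right (xiF_le c1 p x z0) _
      _ = p z0 - q z0 := by ring
      _ ≤ dist (p z0) (q z0) := by rw [Real.dist_eq]; exact le_abs_self _
      _ ≤ dist p q := dist_le_pi_dist p q z0
  · obtain ⟨z0, hz0⟩ := exists_min c1 p x
    calc xiF c1 q x - xiF c1 p x ≤ (c1 x z0 + q z0) - (c1 x z0 + p z0) := by
          rw [hz0]; exact sub_le_sub_right (xiF_le c1 q x z0) _
      _ = q z0 - p z0 := by ring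
      _ ≤ dist (p z0) (q z0) := by rw [Real.dist_eq, abs_sub_comm]; exact le_abs_self _
      _ ≤ dist p q := dist_le_pi_dist p q z0

def Aset (p : ι → ℝ) (z : ι) : Set X := {x | c1 x z + p z = xiF c1 p x}

lemma Aset_closed (hc1 : ∀ z, Continuous fun x => c1 x z) (p : ι → ℝ) (z : ι) :
    IsClosed (Aset c1 p z) :=
  isClosed_eq ((hc1 z).add continuous_const) (xiF_cont c1 hc1 p)

noncomputable def Fder (p : ι → ℝ) (x : X) : (ι → ℝ) →L[ℝ] ℝ :=
  ∑ w, Set.indicator (Aset c1 p w) (1 : X → ℝ) x • ContinuousLinearMap.proj w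

def TieSet (p : ι → ℝ) : Set X :=
  ⋃ (z : ι), ⋃ (z' : ι), ⋃ (_ : z ≠ z'), Aset c1 p z ∩ Aset c1 p z'

lemma strict_min {p : ι → ℝ} {x : X} (hx : x ∉ TieSet c1 p) :
    ∃ z0, x ∈ Aset c1 p z0 ∧ ∀ z, z ≠ z0 → xiF c1 p x < c1 x z + p z := by
  obtain ⟨z0, hz0⟩ := exists_min c1 p x
  refine ⟨z0, hz0.symm, fun z hz => ?_⟩
  rcases lt_or_eq_of_le (xiF_le c1 p x z) with h | h
  · exact h
  · exfalso
    exact hx (Set.mem_iUnion.2 ⟨z, Set.mem_iUnion.2 ⟨z0, Set.mem_iUnion.2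
      ⟨hz, h.symm, hz0.symm⟩⟩⟩)

lemma Fder_eq_proj {p : ι → ℝ} {x : X} {z0 : ι} (h0 : x ∈ Aset c1 p z0)
    (h1 : ∀ z, z ≠ z0 → x ∉ Aset c1 p z) :
    Fder c1 p x = ContinuousLinearMap.proj z0 := by
  rw [Fder, Finset.sum_eq_single z0]
  · rw [Set.indicator_of_mem h0, Pi.one_apply, one_smul]
  · intro w _ hw
    rw [Set.indicator_of_notMem (h1 w hw), zero_smul]
  · intro h; exact absurd (Finset.mem_univ z0) h

lemma eventually_strict {p : ι → ℝ} {x : X} {z0 : ι}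
    (h : ∀ z, z ≠ z0 → c1 x z0 + p z0 < c1 x z + p z) :
    ∀ᶠ q in nhds p, ∀ z, z ≠ z0 → c1 x z0 + q z0 < c1 x z + q z := by
  have H : ∀ z : ι, ∀ᶠ q in nhds p, z ≠ z0 → c1 x z0 + q z0 < c1 x z + q z := by
    intro z
    by_cases hz : z = z0
    · subst hz; filter_upwards with q h'; exact absurd rfl h'
    · have hc : Continuous fun q : ι → ℝ => c1 x z0 + q z0 :=
        continuous_const.add (continuous_apply z0)
      have hc' : Continuous fun q : ι → ℝ => c1 x z + q z :=
        continuous_const.add (continuous_apply z)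
      have := (hc.continuousAt (x := p)).eventually_lt (hc'.continuousAt) (h z hz)
      filter_upwards [this] with q hq _
      exact hq
  exact Filter.eventually_all.2 H

lemma eventually_good {p : ι → ℝ} {x : X} (hx : x ∉ TieSet c1 p) :
    ∃ z0, x ∈ Aset c1 p z0 ∧
      ∀ᶠ q in nhds p, x ∈ Aset c1 q z0 ∧ ∀ z, z ≠ z0 → x ∉ Aset c1 q z := by
  obtain ⟨z0, h0, h1⟩ := strict_min c1 hx
  have h1' : ∀ z, z ≠ z0 → c1 x z0 + p z0 < c1 x z + p z := by
    intro z hz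
    have h0' : c1 x z0 + p z0 = xiF c1 p x := h0
    rw [h0']; exact h1 z hz
  refine ⟨z0, h0, ?_⟩
  filter_upwards [eventually_strict c1 h1'] with q hq
  have hximin : xiF c1 q x = c1 x z0 + q z0 := by
    refine le_antisymm (xiF_le c1 q x z0) ?_
    obtain ⟨z1, hz1⟩ := exists_min c1 q x
    rcases eq_or_ne z1 z0 with h | h
    · rw [hz1, h]
    · rw [hz1]; exact (hq z1 h).le
  refine ⟨hximin.symm, fun z hz hmem => ?_⟩
  have : c1 x z + q z = c1 x z0 + q z0 := by rw [hmem, hximin]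
  exact absurd this (ne_of_gt (hq z hz))

lemma Fder_eq_of_good {p : ι → ℝ} {x : X} (hx : x ∉ TieSet c1 p) {z0 : ι}
    (h0 : x ∈ Aset c1 p z0) :
    Fder c1 p x = ContinuousLinearMap.proj z0 := by
  apply Fder_eq_proj c1 h0
  intro z hz hmem
  obtain ⟨z0', h0', h1'⟩ := strict_min c1 hx
  have e0 : z0 = z0' := by
    by_contra hne
    exact absurd (h0 : c1 x z0 + p z0 = xiF c1 p x).symm (ne_of_lt (h1' z0 hne))
  have : z ≠ z0' := e0 ▸ hz
  exact absurd (hmem : c1 x z + p z = xiF c1 p x).symm (ne_of_lt (h1' z this))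

lemma hasFDerivAt_xiF {p : ι → ℝ} {x : X} (hx : x ∉ TieSet c1 p) :
    HasFDerivAt (fun q => xiF c1 q x) (Fder c1 p x) p := by
  obtain ⟨z0, h0, hev⟩ := eventually_good c1 hx
  have heq : ∀ᶠ q in nhds p, xiF c1 q x = c1 x z0 + q z0 := by
    filter_upwards [hev] with q hq
    exact hq.1.symm
  have haff0 : HasFDerivAt (fun q : ι → ℝ => q z0)
      (ContinuousLinearMap.proj (R := ℝ) (φ := fun _ : ι => ℝ) z0) p :=
    (ContinuousLinearMap.proj (R := ℝ) (φ := fun _ : ι => ℝ) z0).hasFDerivAt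
  have haff : HasFDerivAt (fun q : ι → ℝ => c1 x z0 + q z0)
      (ContinuousLinearMap.proj (R := ℝ) (φ := fun _ : ι => ℝ) z0) p :=
    haff0.const_add _
  rw [Fder_eq_of_good c1 hx h0]
  exact haff.congr_of_eventuallyEq heq

lemma norm_proj_le (w : ι) :
    ‖(ContinuousLinearMap.proj (R := ℝ) (φ := fun _ : ι => ℝ) w)‖ ≤ 1 := by
  apply ContinuousLinearMap.opNorm_le_bound _ zero_le_one
  intro f
  rw [one_mul]
  exact norm_le_pi_norm f w

lemma Fder_norm_le (p : ι → ℝ) (x : X) : ‖Fder c1 p x‖ ≤ (Fintype.card ι : ℝ) := by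
  refine (norm_sum_le _ _).trans ?_
  have h1 : ∀ w : ι, ‖Set.indicator (Aset c1 p w) (1 : X → ℝ) x •
      (ContinuousLinearMap.proj (R := ℝ) (φ := fun _ : ι => ℝ) w)‖ ≤ 1 := by
    intro w
    rw [norm_smul (Set.indicator (Aset c1 p w) (1 : X → ℝ) x)
      (ContinuousLinearMap.proj (R := ℝ) (φ := fun _ : ι => ℝ) w)]
    have ha : ‖Set.indicator (Aset c1 p w) (1 : X → ℝ) x‖ ≤ 1 := by
      by_cases h : x ∈ Aset c1 p w
      · rw [Set.indicator_of_mem h]; simp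
      · rw [Set.indicator_of_notMem h]; simp
    calc ‖Set.indicator (Aset c1 p w) (1 : X → ℝ) x‖ * ‖_‖ ≤ 1 * 1 :=
          mul_le_mul ha (norm_proj_le w) (norm_nonneg _) zero_le_one
      _ = 1 := mul_one 1
  calc ∑ w, ‖Set.indicator (Aset c1 p w) (1 : X → ℝ) x •
        (ContinuousLinearMap.proj (R := ℝ) (φ := fun _ : ι => ℝ) w)‖
      ≤ ∑ _w : ι, (1 : ℝ) := Finset.sum_le_sum fun w _ => h1 w
    _ = (Fintype.card ι : ℝ) := by simp

lemma Fder_apply_single (p : ι → ℝ) (x : X) (z : ι) :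
    (Fder c1 p x) (Pi.single z 1) = Set.indicator (Aset c1 p z) (1 : X → ℝ) x := by
  simp only [Fder, ContinuousLinearMap.sum_apply, ContinuousLinearMap.smul_apply,
    ContinuousLinearMap.proj_apply, Pi.single_apply, smul_eq_mul, mul_ite, mul_one, mul_zero]
  rw [Finset.sum_ite_eq' Finset.univ z]
  simp

lemma Fder_meas (hc1 : ∀ z, Continuous fun x => c1 x z) (p : ι → ℝ) :
    StronglyMeasurable (Fder c1 p) := by
  apply Finset.stronglyMeasurable_fun_sum
  intro w _
  have hA : MeasurableSet (Aset c1 p w) := (Aset_closed c1 hc1 p w).measurableSet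
  exact ((stronglyMeasurable_const.indicator hA :
    StronglyMeasurable (Set.indicator (Aset c1 p w) (1 : X → ℝ)))).smul
    stronglyMeasurable_const

variable (μ : Measure X)

lemma tie_null (hlevel : ∀ (t : ℝ) (z z' : ι), z ≠ z' → μ {x | c1 x z - c1 x z' = t} = 0)
    (p : ι → ℝ) : μ (TieSet c1 p) = 0 := by
  apply measure_iUnion_null
  intro z
  apply measure_iUnion_null
  intro z'
  apply measure_iUnion_null
  intro h
  apply measure_mono_null _ (hlevel (p z' - p z) z z' h)
  rintro x ⟨h1, h2⟩
  have h1' : c1 x z + p z = xiF c1 p x := h1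
  have h2' : c1 x z' + p z' = xiF c1 p x := h2
  have : c1 x z + p z = c1 x z' + p z' := by rw [h1', h2']
  show c1 x z - c1 x z' = p z' - p z
  linarith

lemma ae_not_tie (hlevel : ∀ (t : ℝ) (z z' : ι), z ≠ z' → μ {x | c1 x z - c1 x z' = t} = 0)
    (p : ι → ℝ) : ∀ᵐ x ∂μ, x ∉ TieSet c1 p :=
  measure_eq_zero_iff_ae_notMem.1 (tie_null c1 μ hlevel p)

lemma xiF_integrable [IsFiniteMeasure μ] (hc1 : ∀ z, Continuous fun x => c1 x z)
    (hb1 : ∀ z, ∃ M, ∀ x, |c1 x z| ≤ M) (p : ι → ℝ) :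
    Integrable (fun x => xiF c1 p x) μ := by
  choose M hM using hb1
  set C : ℝ := ∑ z, (|M z| + |p z|) with hC
  have hterm : ∀ z : ι, (0 : ℝ) ≤ |M z| + |p z| := fun z =>
    add_nonneg (abs_nonneg _) (abs_nonneg _)
  have hzC : ∀ z : ι, |M z| + |p z| ≤ C := fun z =>
    Finset.single_le_sum (fun w _ => hterm w) (Finset.mem_univ z)
  have hbound : ∀ x, ‖xiF c1 p x‖ ≤ C := by
    intro x
    rw [Real.norm_eq_abs, abs_le]
    constructor
    · obtain ⟨z0, hz0⟩ := exists_min c1 p x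
      have : -(|M z0| + |p z0|) ≤ c1 x z0 + p z0 := by
        have h1 : |c1 x z0| ≤ M z0 := hM z0 x
        have h2 : -(|M z0|) ≤ c1 x z0 := by
          have := abs_le.1 (h1.trans (le_abs_self _))
          linarith [this.1]
        have h3 : -(|p z0|) ≤ p z0 := neg_abs_le _
        linarith
      rw [hz0]
      linarith [hzC z0]
    · have z0 := Classical.arbitrary ι
      have h1 : c1 x z0 + p z0 ≤ |M z0| + |p z0| := by
        have := (hM z0 x).trans (le_abs_self _)
        have h2 : c1 x z0 ≤ |M z0| := (le_abs_self _).trans this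
        have h3 : p z0 ≤ |p z0| := le_abs_self _
        linarith
      exact (xiF_le c1 p x z0).trans (h1.trans (hzC z0))
  exact (integrable_const C).mono'
    ((xiF_cont c1 hc1 p).aestronglyMeasurable) (Filter.Eventually.of_forall hbound)

lemma main_deriv [IsFiniteMeasure μ] (hc1 : ∀ z, Continuous fun x => c1 x z)
    (hb1 : ∀ z, ∃ M, ∀ x, |c1 x z| ≤ M)
    (hlevel : ∀ (t : ℝ) (z z' : ι), z ≠ z' → μ {x | c1 x z - c1 x z' = t} = 0)
    (p : ι → ℝ) :
    Integrable (Fder c1 p) μ ∧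
      HasFDerivAt (fun q => ∫ x, xiF c1 q x ∂μ) (∫ x, Fder c1 p x ∂μ) p := by
  apply hasFDerivAt_integral_of_dominated_loc_of_lip (s := ball p 1) (bound := fun _ => (1 : ℝ))
    (ball_mem_nhds p one_pos)
  · exact Filter.Eventually.of_forall fun q => (xiF_cont c1 hc1 q).aestronglyMeasurable
  · exact xiF_integrable c1 μ hc1 hb1 p
  · exact (Fder_meas c1 hc1 p).aestronglyMeasurable
  · refine Filter.Eventually.of_forall fun x => ?_
    have h1 : Real.nnabs (1 : ℝ) = 1 := by simp
    rw [h1]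
    exact (xiF_lip c1 x).lipschitzOnWith (s := ball p 1)
  · exact integrable_const 1
  · filter_upwards [ae_not_tie c1 μ hlevel p] with x hx
    exact hasFDerivAt_xiF c1 hx

lemma cont_D [IsFiniteMeasure μ] (hc1 : ∀ z, Continuous fun x => c1 x z)
    (hlevel : ∀ (t : ℝ) (z z' : ι), z ≠ z' → μ {x | c1 x z - c1 x z' = t} = 0) :
    Continuous fun p => ∫ x, Fder c1 p x ∂μ := by
  rw [continuous_iff_continuousAt]
  intro p
  refine tendsto_integral_filter_of_dominated_convergence
    (bound := fun _ => (Fintype.card ι : ℝ)) ?_ ?_ ?_ ?_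
  · exact Filter.Eventually.of_forall fun q => (Fder_meas c1 hc1 q).aestronglyMeasurable
  · exact Filter.Eventually.of_forall fun q =>
      Filter.Eventually.of_forall fun x => Fder_norm_le c1 q x
  · exact integrable_const _
  · filter_upwards [ae_not_tie c1 μ hlevel p] with x hx
    obtain ⟨z0, h0, hev⟩ := eventually_good c1 hx
    have hconst : ∀ᶠ q in nhds p, Fder c1 q x = ContinuousLinearMap.proj z0 := by
      filter_upwards [hev] with q hq
      exact Fder_eq_proj c1 hq.1 hq.2
    have hp : Fder c1 p x = ContinuousLinearMap.proj z0 := Fder_eq_of_good c1 hx h0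
    rw [hp]
    exact Filter.Tendsto.congr' (Filter.EventuallyEq.symm hconst) tendsto_const_nhds

end aux

/-- Under Assumption (a), `Ξ_μ` is continuously differentiable on
`ℝ^{Z_m}` and `∂Ξ_μ/∂p_z (p) = μ(A_z(p))`. -/
theorem stmt_6
    {X : Type*} [TopologicalSpace X] [PolishSpace X] [MeasurableSpace X] [BorelSpace X]
    {ι : Type*} [Fintype ι] [Nonempty ι] [DecidableEq ι]
    (μ : Measure X) [IsProbabilityMeasure μ]
    (c1 : X → ι → ℝ)
    (hc1 : ∀ z, Continuous fun x => c1 x z) (hb1 : ∀ z, ∃ M, ∀ x, |c1 x z| ≤ M)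
    (hatomless : ∀ x : X, μ {x} = 0)
    (hlevel : ∀ (t : ℝ) (z z' : ι), z ≠ z' → μ {x | c1 x z - c1 x z' = t} = 0) :
    ContDiff ℝ 1 (fun p : ι → ℝ => ∫ x, (⨅ z, c1 x z + p z) ∂μ) ∧
    ∀ (p : ι → ℝ) (z : ι),
      fderiv ℝ (fun q : ι → ℝ => ∫ x, (⨅ w, c1 x w + q w) ∂μ) p (Pi.single z 1)
        = (μ {x : X | c1 x z + p z = ⨅ w, (c1 x w + p w)}).toReal := by
  have hmain := main_deriv c1 μ hc1 hb1 hlevel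
  have hFeq : (fun p : ι → ℝ => ∫ x, (⨅ z, c1 x z + p z) ∂μ)
      = fun p : ι → ℝ => ∫ x, xiF c1 p x ∂μ := rfl
  have hfderiv : ∀ p : ι → ℝ,
      fderiv ℝ (fun q : ι → ℝ => ∫ x, xiF c1 q x ∂μ) p = ∫ x, Fder c1 p x ∂μ :=
    fun p => (hmain p).2.fderiv
  constructor
  · rw [hFeq]
    rw [contDiff_one_iff_fderiv]
    constructor
    · exact fun p => (hmain p).2.differentiableAt
    · have : (fderiv ℝ fun q : ι → ℝ => ∫ x, xiF c1 q x ∂μ)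
          = fun p => ∫ x, Fder c1 p x ∂μ := funext hfderiv
      rw [this]
      exact cont_D c1 μ hc1 hlevel
  · intro p z
    have h1 : fderiv ℝ (fun q : ι → ℝ => ∫ x, (⨅ w, c1 x w + q w) ∂μ) p
        = ∫ x, Fder c1 p x ∂μ := hfderiv p
    rw [h1]
    rw [ContinuousLinearMap.integral_apply (hmain p).1 (Pi.single z 1)]
    have h2 : ∀ x, (Fder c1 p x) (Pi.single z 1)
        = Set.indicator (Aset c1 p z) (1 : X → ℝ) x := fun x => Fder_apply_single c1 p x z
    simp only [h2]
    have hA : MeasurableSet (Aset c1 p z) := (Aset_closed c1 hc1 p z).measurableSet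
    rw [MeasureTheory.integral_indicator_one hA]
    rfl
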